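/- For every threefold triple system TS_3(v) with v ≥ 2, the rank over the rationals of its generalized incidence matrix N_2 is at least v(v−1)/6, i.e. at least (1/3)·binom(v,2). -/

import Mathlib

open Finset

/-- `IsPBD B lam K`: the indexed family of blocks `B` (a multiset of subsets of the
point set `V`, one block per index) is a pairwise balanced design `PBD_lam(|V|, K)`:
every block has size in `K`, and every pair of distinct points lies in exactly `lam`
blocks (counted with multiplicity). -/
def IsPBD {V : Type*} [DecidableEq V] {ι : Type*} [Fintype ι]
    (B : ι → Finset V) (lam : ℕ) (K : Set ℕ) : Prop :=
  (∀ i, (B i).card ∈ K) ∧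
  (∀ p : Finset V, p.card = 2 → (Finset.univ.filter (fun i => p ⊆ B i)).card = lam)

/-- The generalized incidence matrix `N₂`: rows indexed by 2-element subsets of the
point set, columns indexed by the blocks (with multiplicity); entry is 1 if the pair
is contained in the block, and 0 otherwise. -/
def N2 {V : Type*} [DecidableEq V] {ι : Type*} (F : Type*) [Zero F] [One F]
    (B : ι → Finset V) : Matrix {P : Finset V // P.card = 2} ι F :=
  Matrix.of fun P i => if (P : Finset V) ⊆ B i then 1 else 0

/-- For every threefold triple system `TS_3(v)` with `v ≥ 2`, the rank over `ℚ` of its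
generalized incidence matrix `N₂` is at least `v(v-1)/6 = (1/3)·binom(v,2)`
(stated without division as `v(v-1) ≤ 6·rank`). -/
theorem ts3_rat_rank_ge {v : ℕ} (hv : 2 ≤ v) {ι : Type*} [Fintype ι]
    (B : ι → Finset (Fin v)) (hB : IsPBD B 3 {3}) :
    v * (v - 1) ≤ 6 * (N2 ℚ B).rank := by
  classical
  set M := N2 ℚ B with hM
  set T : Set ({P : Finset (Fin v) // P.card = 2} → ℚ) := Set.range M.transpose with hT
  obtain ⟨b, hbT, hspan, hli⟩ := exists_linearIndependent ℚ T
  have hbfin : b.Finite := ((Set.finite_range M.transpose).subset hbT)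
  haveI : Fintype b := hbfin.fintype
  have hrank : M.rank = b.toFinset.card := by
    rw [Matrix.rank_eq_finrank_span_cols]
    change Module.finrank ℚ (Submodule.span ℚ T) = _
    rw [← hspan, finrank_span_set_eq_card hli]
  -- every pair coordinate is nonzero on some basis vector
  have key : ∀ P : {P : Finset (Fin v) // P.card = 2}, ∃ x ∈ b, x P ≠ 0 := by
    intro P
    by_contra h
    push_neg at h
    have hker : Submodule.span ℚ b ≤ LinearMap.ker
        (LinearMap.proj (R := ℚ) (φ := fun _ : {P : Finset (Fin v) // P.card = 2} => ℚ) P) := by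
      rw [Submodule.span_le]
      intro x hx
      simpa [LinearMap.mem_ker] using h x hx
    obtain ⟨i, hi⟩ : ∃ i, (P : Finset (Fin v)) ⊆ B i := by
      have h3 := hB.2 P P.2
      have hne : (Finset.univ.filter fun i => (P : Finset (Fin v)) ⊆ B i).Nonempty := by
        rw [← Finset.card_pos, h3]; norm_num
      obtain ⟨i, hi⟩ := hne
      exact ⟨i, (Finset.mem_filter.mp hi).2⟩
    have hcol : M.transpose i ∈ Submodule.span ℚ b := by
      rw [hspan]; exact Submodule.subset_span ⟨i, rfl⟩
    have h0 := hker hcol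
    rw [LinearMap.mem_ker] at h0
    have : M.transpose i P = 0 := h0
    rw [Matrix.transpose_apply, hM] at this
    simp [N2, hi] at this
  choose g hg1 hg2 using key
  -- each fiber of g has at most 3 elements
  have hcount : Fintype.card {P : Finset (Fin v) // P.card = 2} ≤ 3 * b.toFinset.card := by
    rw [← Finset.card_univ]
    apply Finset.card_le_mul_card_image_of_maps_to
      (f := g) (t := b.toFinset) (fun P _ => Set.mem_toFinset.mpr (hg1 P))
    intro x hx
    obtain ⟨i, rfl⟩ := hbT (Set.mem_toFinset.mp hx)
    calc (Finset.univ.filter fun P => g P = M.transpose i).card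
        ≤ (Finset.univ.filter fun P : {P : Finset (Fin v) // P.card = 2} =>
            (P : Finset (Fin v)) ⊆ B i).card := by
          apply Finset.card_le_card
          intro P hP
          rw [Finset.mem_filter] at hP ⊢
          refine ⟨hP.1, ?_⟩
          have := hg2 P
          rw [hP.2] at this
          by_contra hsub
          exact this (by simp [hM, N2, Matrix.transpose_apply, hsub])
      _ ≤ 3 := by
          have hBi : (B i).card = 3 := hB.1 i
          have : (Finset.univ.filter fun P : {P : Finset (Fin v) // P.card = 2} =>
              (P : Finset (Fin v)) ⊆ B i).card ≤ ((B i).powersetCard 2).card := by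
            refine Finset.card_le_card_of_injOn (fun P => (P : Finset (Fin v))) ?_ ?_
            · intro P hP
              rw [Finset.mem_coe, Finset.mem_filter] at hP
              rw [Finset.mem_coe, Finset.mem_powersetCard]
              exact ⟨hP.2, P.2⟩
            · intro P _ Q _ h
              exact Subtype.ext h
          rw [Finset.card_powersetCard, hBi] at this
          simpa using this
  have hcards : Fintype.card {P : Finset (Fin v) // P.card = 2} = v.choose 2 := by
    simp [Fintype.card_finset_len]
  -- arithmetic
  have h2 : v * (v - 1) = 2 * v.choose 2 := by
    have := Nat.choose_two_right v
    have heven : 2 ∣ v * (v - 1) := by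
      rcases Nat.even_or_odd v with h | h
      · exact Dvd.dvd.mul_right h.two_dvd _
      · exact Dvd.dvd.mul_left (Nat.Odd.sub_odd h odd_one).two_dvd _
    omega
  rw [hrank]
  omega
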